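/- Let C be an abelian category with all objects of finite length, let A be a simple object, and let φ : M → N be a morphism with (A : coker φ) = 0. Suppose N = N_A ⊕ N' where N_A is semisimple A-isotypic and (A : N') = 0. Then the composition of φ with the projection N → N_A is an epimorphism. -/

import Mathlib

open CategoryTheory Limits

attribute [local instance] CategoryTheory.Limits.HasFiniteBiproducts.of_hasFiniteProducts

namespace CuspidalClean

variable {C : Type*} [Category C] [Abelian C]

/-- A composition series of an object `M` of an abelian category: a finite increasing chain
of subobjects from `⊥` to `⊤` all of whose successive quotients are simple. -/
structure CompSeries (M : C) where
  n : ℕ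
  chain : Fin (n + 1) → Subobject M
  mono : Monotone chain
  bot : chain 0 = ⊥
  top : chain (Fin.last n) = ⊤
  simple : ∀ i : Fin n,
    Simple (cokernel (Subobject.ofLE _ _ (mono (Fin.castSucc_lt_succ : Fin.castSucc i < i.succ).le)))

/-- The number of factors of a composition series isomorphic to a given object `A`. -/
noncomputable def CompSeries.mult {M : C} (s : CompSeries M) (A : C) : ℕ :=
  Nat.card {i : Fin s.n //
    Nonempty (cokernel (Subobject.ofLE _ _ (s.mono (Fin.castSucc_lt_succ : Fin.castSucc i < i.succ).le)) ≅ A)}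

/-- The Jordan–Hölder multiplicity `(A : M)`: the number of composition factors of `M`
isomorphic to `A` (computed as the supremum over all composition series; by the
Jordan–Hölder theorem this is the common value when `M` has finite length). -/
noncomputable def mult (A M : C) : ℕ :=
  sSup {k : ℕ | ∃ s : CompSeries M, s.mult A = k}

/-- An abelian category has all objects of finite length iff every object admits a
composition series. -/
def FiniteLength (C : Type*) [Category C] [Abelian C] : Prop :=
  ∀ M : C, Nonempty (CompSeries M)

/-- `M` is `A`-isotypic if it is a finite direct sum of copies of `A`. -/
def IsIsotypic (A M : C) : Prop :=
  ∃ n : ℕ, Nonempty (M ≅ ⨁ fun _ : Fin n => A)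

/-- `M` is semisimple if it is a finite direct sum of simple objects. -/
def IsSemisimpleObj (M : C) : Prop :=
  ∃ (n : ℕ) (f : Fin n → C), (∀ i, Simple (f i)) ∧ Nonempty (M ≅ ⨁ f)

end CuspidalClean


namespace CuspidalAux
open CuspidalClean

variable {C : Type*} [Category C] [Abelian C] {X : C}

theorem sup_factors_of_add {a b : Subobject X} {T : C} {f : T ⟶ X} {f₁ : T ⟶ (a : C)}
    {f₂ : T ⟶ (b : C)} (h : f = f₁ ≫ a.arrow + f₂ ≫ b.arrow) : (a ⊔ b).Factors f := by
  rw [h]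
  exact Subobject.factors_add _ _
    (Subobject.sup_factors_of_factors_left (Subobject.factors_comp_arrow f₁))
    (Subobject.sup_factors_of_factors_right (Subobject.factors_comp_arrow f₂))

instance : IsModularLattice (Subobject X) := by
  constructor
  intro a b c hac
  set d := (a ⊔ b) ⊓ c with hd
  set u : ((a : C) ⊞ (b : C)) ⟶ X := biprod.desc a.arrow b.arrow with hu
  have ha : a ≤ Subobject.mk (image.ι u) := by
    refine Subobject.le_mk_of_comm (biprod.inl ≫ factorThruImage u) ?_
    rw [Category.assoc, image.fac, hu, biprod.inl_desc]
  have hb : b ≤ Subobject.mk (image.ι u) := by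
    refine Subobject.le_mk_of_comm (biprod.inr ≫ factorThruImage u) ?_
    rw [Category.assoc, image.fac, hu, biprod.inr_desc]
  have hsup : d ≤ Subobject.mk (image.ι u) := le_trans inf_le_left (sup_le ha hb)
  set v : (d : C) ⟶ image u :=
    Subobject.ofLE d _ hsup ≫ (Subobject.underlyingIso (image.ι u)).hom with hv
  have hv2 : v ≫ image.ι u = d.arrow := by
    rw [hv, Category.assoc, Subobject.underlyingIso_hom_comp_eq_mk, Subobject.ofLE_arrow]
  -- pullback of the epi `factorThruImage u` along `v`
  set P := pullback (factorThruImage u) v with hP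
  have hepi : Epi (pullback.snd (factorThruImage u) v) := inferInstance
  set f₁ : P ⟶ (a : C) := pullback.fst (factorThruImage u) v ≫ biprod.fst with hf₁
  set f₂ : P ⟶ (b : C) := pullback.fst (factorThruImage u) v ≫ biprod.snd with hf₂
  have key : pullback.snd (factorThruImage u) v ≫ d.arrow = f₁ ≫ a.arrow + f₂ ≫ b.arrow := by
    have hdesc : biprod.desc a.arrow b.arrow = biprod.fst ≫ a.arrow + biprod.snd ≫ b.arrow := by
      ext <;> simp
    rw [← hv2, ← Category.assoc, ← pullback.condition, Category.assoc, image.fac]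
    show pullback.fst (factorThruImage u) v ≫ biprod.desc a.arrow b.arrow = _
    rw [hdesc, Preadditive.comp_add, ← Category.assoc, ← Category.assoc, ← hf₁, ← hf₂]
  -- f₂ ≫ b.arrow factors through c
  have hcf : c.Factors (f₂ ≫ b.arrow) := by
    have h1 : c.Factors (pullback.snd (factorThruImage u) v ≫ d.arrow) :=
      Subobject.factors_of_factors_right _ (Subobject.factors_of_le _ inf_le_right (Subobject.factors_self d))
    have h2 : c.Factors ((-f₁) ≫ a.arrow) :=
      Subobject.factors_of_factors_right _ (Subobject.factors_of_le _ hac (Subobject.factors_self a))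
    have := Subobject.factors_add _ _ h1 h2
    rwa [Preadditive.neg_comp, ← sub_eq_add_neg, key, add_sub_cancel_left] at this
  have hbcf : (b ⊓ c).Factors (f₂ ≫ b.arrow) :=
    (Subobject.inf_factors _).2 ⟨Subobject.factors_comp_arrow f₂, hcf⟩
  have key2 : (a ⊔ (b ⊓ c)).Factors (pullback.snd (factorThruImage u) v ≫ d.arrow) := by
    refine sup_factors_of_add (f₁ := f₁) (f₂ := (b ⊓ c).factorThru _ hbcf) ?_
    rw [Subobject.factorThru_arrow, key]
  -- lift along the epi
  set l := (a ⊔ (b ⊓ c)).factorThru _ key2 with hl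
  have hl2 : l ≫ (a ⊔ (b ⊓ c)).arrow = pullback.snd (factorThruImage u) v ≫ d.arrow :=
    Subobject.factorThru_arrow _ _ _
  haveI := strongEpi_of_epi (pullback.snd (factorThruImage u) v)
  have sq : CommSq l (pullback.snd (factorThruImage u) v) (a ⊔ (b ⊓ c)).arrow d.arrow :=
    ⟨hl2⟩
  exact Subobject.le_of_comm sq.lift sq.fac_right

theorem ofLE_self_eq_id {a : Subobject X} (h : a ≤ a) : Subobject.ofLE a a h = 𝟙 _ :=
  Subobject.eq_of_comp_arrow_eq (by simp)

theorem isZero_cokernel_of_epi {Y Z : C} (f : Y ⟶ Z) [Epi f] : IsZero (cokernel f) := by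
  haveI : Epi (0 : Z ⟶ cokernel f) := cokernel.π_of_epi f ▸ inferInstanceAs (Epi (cokernel.π f))
  exact IsZero.of_epi_zero Z (cokernel f)

theorem covBy_of_simple {a b : Subobject X} (hab : a ≤ b)
    (hs : Simple (cokernel (Subobject.ofLE a b hab))) : a ⋖ b := by
  have hlt : a < b := by
    rcases lt_or_eq_of_le hab with h | h
    · exact h
    · exfalso
      subst h
      rw [ofLE_self_eq_id] at hs
      exact (Simple.not_isZero _) (isZero_cokernel_of_epi (𝟙 (Subobject.underlying.obj a)))
  refine ⟨hlt, fun {m} ham hmb => ?_⟩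
  set g := Subobject.ofLE m b hmb.le with hg
  set π := cokernel.π (Subobject.ofLE a b hab) with hπ
  by_cases hq : g ≫ π = 0
  · -- then m ≤ a
    have hl := Abelian.monoLift_comp (Subobject.ofLE a b hab) g hq
    refine absurd (Subobject.le_of_comm (Abelian.monoLift (Subobject.ofLE a b hab) g hq) ?_)
      ham.not_ge
    rw [← Subobject.ofLE_arrow hab, ← Category.assoc, hl, hg, Subobject.ofLE_arrow]
  · -- then m = b
    have hι0 : image.ι (g ≫ π) ≠ 0 := fun h0 => hq (by rw [← image.fac (g ≫ π), h0, comp_zero])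
    haveI : IsIso (image.ι (g ≫ π)) := isIso_of_mono_of_nonzero hι0
    haveI : Epi (g ≫ π) := by
      rw [← image.fac (g ≫ π)]; infer_instance
    have hcomp : Subobject.ofLE a m ham.le ≫ g = Subobject.ofLE a b hab := by
      rw [hg]; exact Subobject.ofLE_comp_ofLE _ _ _ _ _
    have hc0 : Subobject.ofLE a b hab ≫ cokernel.π g = 0 := by
      rw [← hcomp, Category.assoc, cokernel.condition, comp_zero]
    have hdesc0 : cokernel.desc _ (cokernel.π g) hc0 = 0 := by
      rw [← cancel_epi (g ≫ π)]
      rw [Category.assoc, hπ, cokernel.π_desc, cokernel.condition, comp_zero]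
    have hπg : cokernel.π g = 0 := by
      rw [← cokernel.π_desc (Subobject.ofLE a b hab) (cokernel.π g) hc0, hdesc0, comp_zero]
    haveI : Epi g := Abelian.epi_of_cokernel_π_eq_zero _ hπg
    haveI : IsIso g := isIso_of_mono_of_epi g
    refine absurd (Subobject.le_of_comm (inv g) ?_) hmb.not_ge
    rw [IsIso.inv_comp_eq]
    exact (Subobject.ofLE_arrow hmb.le).symm

theorem le_of_factors {x P : Subobject X} (h : P.Factors x.arrow) : x ≤ P :=
  Subobject.le_of_comm (P.factorThru _ h) (Subobject.factorThru_arrow _ _ h)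

theorem sup_eq_of_covBy {x y z : Subobject X} (hx : x ⋖ z) (hy : y ⋖ z) (hxy : x ≠ y) :
    x ⊔ y = z := by
  rcases (sup_le hx.1.le hy.1.le).lt_or_eq with h | h
  · exfalso
    rcases (le_sup_left : x ≤ x ⊔ y).lt_or_eq with h2 | h2
    · exact hx.2 h2 h
    · have hyx : y ≤ x := sup_eq_left.1 h2.symm
      rcases hyx.lt_or_eq with h3 | h3
      · exact hy.2 h3 hx.1
      · exact hxy h3.symm
  · exact h

instance (X : C) : JordanHolderLattice (Subobject X) where
  IsMaximal x y := x ⋖ y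
  lt_of_isMaximal h := h.1
  sup_eq_of_isMaximal hx hy := sup_eq_of_covBy hx hy
  isMaximal_inf_left_of_isMaximal_sup _ hy := inf_covBy_of_covBy_sup_right hy


section Series
variable {C : Type*} [Category C] [Abelian C]

/-- Convert a `CompSeries` to a mathlib `CompositionSeries` in the subobject lattice. -/
def toCS {Q : C} (s : CompSeries Q) : CompositionSeries (Subobject Q) where
  length := s.n
  toFun := s.chain
  step i := covBy_of_simple _ (s.simple i)

theorem n_eq {Q : C} (s t : CompSeries Q) : s.n = t.n := by
  have h := CompositionSeries.jordan_holder (toCS s) (toCS t) ?_ ?_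
  · exact CompositionSeries.Equivalent.length_eq h
  · show s.chain 0 = t.chain 0
    rw [s.bot, t.bot]
  · show s.chain (Fin.last s.n) = t.chain (Fin.last t.n)
    rw [s.top, t.top]

theorem mult_le_n {Q A : C} (s : CompSeries Q) : s.mult A ≤ s.n := by
  calc s.mult A ≤ Nat.card (Fin s.n) :=
        Nat.card_le_card_of_injective _ Subtype.val_injective
    _ = s.n := Nat.card_eq_of_equiv_fin (Equiv.refl _)

theorem bddAbove_multSet (A Q : C) (hC : FiniteLength C) :
    BddAbove {k : ℕ | ∃ s : CompSeries Q, s.mult A = k} := by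
  obtain ⟨s₀⟩ := hC Q
  refine ⟨s₀.n, fun k hk => ?_⟩
  obtain ⟨t, rfl⟩ := hk
  calc t.mult A ≤ t.n := mult_le_n t
    _ = s₀.n := (n_eq s₀ t).symm

theorem isZero_of_bot_eq_top {Q : C} (h : (⊥ : Subobject Q) = ⊤) : IsZero Q := by
  have h2 : (⊥ : Subobject Q).Factors (𝟙 Q) := h ▸ Subobject.top_factors _
  rw [Subobject.bot_factors_iff_zero] at h2
  rw [IsZero.iff_id_eq_zero]
  exact h2

/-- A nonzero object with a composition series admits an epimorphism onto a simple object. -/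
theorem exists_epi_simple {Q : C} (hQ : ¬ IsZero Q) (s : CompSeries Q) :
    ∃ (S : C) (g : Q ⟶ S), Simple S ∧ Epi g := by
  have hn : 1 ≤ s.n := by
    by_contra h
    have h0 : s.n = 0 := by omega
    apply hQ
    apply isZero_of_bot_eq_top
    rw [← s.bot, ← s.top]
    congr 1
    ext
    simp [h0]
  set i₀ : Fin s.n := ⟨s.n - 1, by omega⟩ with hi₀
  have htop : s.chain i₀.succ = ⊤ := by
    rw [show i₀.succ = Fin.last s.n from Fin.ext (by simp [hi₀]; omega)]
    exact s.top
  refine ⟨cokernel (Subobject.ofLE _ _ (s.mono (Fin.castSucc_lt_succ (i := i₀)).le)),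
    inv ((⊤ : Subobject Q).arrow) ≫ (Subobject.isoOfEq _ _ htop).inv ≫ cokernel.π _,
    s.simple i₀, ?_⟩
  exact epi_comp _ _

end Series

section Ext
variable {C : Type*} [Category C] [Abelian C]

theorem emb_le {K X : C} (ι : K ⟶ X) [Mono ι] {p q : Subobject K} (h : p ≤ q) :
    Subobject.mk (p.arrow ≫ ι) ≤ Subobject.mk (q.arrow ≫ ι) :=
  Subobject.mk_le_mk_of_comm (Subobject.ofLE p q h)
    (by rw [← Category.assoc, Subobject.ofLE_arrow])

theorem emb_bot {K X : C} (ι : K ⟶ X) [Mono ι] :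
    Subobject.mk ((⊥ : Subobject K).arrow ≫ ι) = ⊥ :=
  Subobject.mk_eq_bot_iff_zero.2 (by rw [Subobject.bot_arrow, zero_comp])

/-- Congruence iso for cokernels of `ofLE`. -/
noncomputable def cokOfLECongr {X : C} {a b a' b' : Subobject X} (ha : a = a') (hb : b = b') (h : a ≤ b) :
    cokernel (Subobject.ofLE a b h) ≅ cokernel (Subobject.ofLE a' b' (ha ▸ hb ▸ h)) := by
  subst ha; subst hb; exact Iso.refl _

/-- The quotient of embedded subobjects agrees with the original quotient. -/
noncomputable def cokEmbIso {K X : C} (ι : K ⟶ X) [Mono ι] {p q : Subobject K} (h : p ≤ q) :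
    cokernel (Subobject.ofLE _ _ (emb_le ι h)) ≅ cokernel (Subobject.ofLE p q h) := by
  refine cokernel.mapIso _ _ (Subobject.underlyingIso _) (Subobject.underlyingIso _) ?_
  rw [← cancel_mono (q.arrow ≫ ι)]
  simp only [Category.assoc, Subobject.ofLE_arrow_assoc, Subobject.ofLE_arrow,
    Subobject.underlyingIso_hom_comp_eq_mk]

set_option maxHeartbeats 1000000 in
set_option synthInstance.maxHeartbeats 400000 in
/-- For an epi `h : Q ⟶ A`, the quotient of `Q` by (the image of the top subobject of)
its kernel is `A`. -/
noncomputable def cokKernelTopIso {Q A : C} (h : Q ⟶ A) [Epi h] :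
    cokernel (Subobject.ofLE
      (Subobject.mk ((⊤ : Subobject (kernel h)).arrow ≫ kernel.ι h)) ⊤ le_top) ≅ A := by
  set e : (Subobject.mk ((⊤ : Subobject (kernel h)).arrow ≫ kernel.ι h) : C) ⟶ kernel h :=
    (Subobject.underlyingIso ((⊤ : Subobject (kernel h)).arrow ≫ kernel.ι h)).hom ≫
      (⊤ : Subobject (kernel h)).arrow with he
  haveI : IsIso e := by rw [he]; infer_instance
  have hg : Subobject.ofLE
      (Subobject.mk ((⊤ : Subobject (kernel h)).arrow ≫ kernel.ι h)) ⊤ le_top =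
      e ≫ (kernel.ι h ≫ inv ((⊤ : Subobject Q).arrow)) := by
    rw [← cancel_mono ((⊤ : Subobject Q).arrow)]
    simp [he]
  haveI : Epi e := inferInstance
  refine cokernelIsoOfEq hg ≪≫ cokernelEpiComp e _ ≪≫ cokernelCompIsIso _ _ ≪≫ ?_
  exact (cokernelIsCokernel _).coconePointUniqueUpToIso
    (Abelian.epiIsCokernelOfKernel _ (kernelIsKernel h))

/-- Extend a composition series of `kernel h` (for `h : Q ⟶ A` epi) to one of `Q`. -/
noncomputable def extendSeries {Q A : C} (h : Q ⟶ A) [Epi h] [Simple A]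
    (sK : CompSeries (kernel h)) : CompSeries Q where
  n := sK.n + 1
  chain := Fin.snoc (fun i => Subobject.mk ((sK.chain i).arrow ≫ kernel.ι h)) ⊤
  mono := by
    rw [Fin.monotone_iff_le_succ]
    intro i
    refine Fin.lastCases ?_ (fun j => ?_) i
    · rw [Fin.snoc_castSucc, Fin.succ_last, Fin.snoc_last]; exact le_top
    · rw [Fin.succ_castSucc, Fin.snoc_castSucc, Fin.snoc_castSucc]
      exact emb_le _ (sK.mono (Fin.castSucc_lt_succ (i := j)).le)
  bot := by
    rw [← Fin.castSucc_zero, Fin.snoc_castSucc, sK.bot, emb_bot]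
  top := Fin.snoc_last _ _
  simple := by
    intro i
    refine Fin.lastCases ?_ (fun j => ?_) i
    · have ha : (Fin.snoc (fun i => Subobject.mk ((sK.chain i).arrow ≫ kernel.ι h)) ⊤ :
          Fin (sK.n + 2) → Subobject Q) (Fin.castSucc (Fin.last sK.n)) =
          Subobject.mk ((⊤ : Subobject (kernel h)).arrow ≫ kernel.ι h) := by
        rw [Fin.snoc_castSucc, sK.top]
      have hb : (Fin.snoc (fun i => Subobject.mk ((sK.chain i).arrow ≫ kernel.ι h)) ⊤ :
          Fin (sK.n + 2) → Subobject Q) (Fin.last sK.n).succ = ⊤ := by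
        rw [Fin.succ_last, Fin.snoc_last]
      exact Simple.of_iso (cokOfLECongr ha hb _ ≪≫ cokKernelTopIso h)
    · have ha : (Fin.snoc (fun i => Subobject.mk ((sK.chain i).arrow ≫ kernel.ι h)) ⊤ :
          Fin (sK.n + 2) → Subobject Q) (Fin.castSucc (Fin.castSucc j)) =
          Subobject.mk ((sK.chain (Fin.castSucc j)).arrow ≫ kernel.ι h) := by
        rw [Fin.snoc_castSucc]
      have hb : (Fin.snoc (fun i => Subobject.mk ((sK.chain i).arrow ≫ kernel.ι h)) ⊤ :
          Fin (sK.n + 2) → Subobject Q) (Fin.castSucc j).succ =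
          Subobject.mk ((sK.chain j.succ).arrow ≫ kernel.ι h) := by
        rw [Fin.succ_castSucc, Fin.snoc_castSucc]
      haveI := sK.simple j
      exact Simple.of_iso (cokOfLECongr ha hb _ ≪≫ cokEmbIso (kernel.ι h)
        (sK.mono (Fin.castSucc_lt_succ (i := j)).le))

theorem extendSeries_chain_castSucc {Q A : C} (h : Q ⟶ A) [Epi h] [Simple A]
    (sK : CompSeries (kernel h)) (j : Fin (sK.n + 1)) :
    (extendSeries h sK).chain (Fin.castSucc j) =
      Subobject.mk ((sK.chain j).arrow ≫ kernel.ι h) := by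
  simp only [extendSeries]
  exact Fin.snoc_castSucc _ _ _

theorem extendSeries_chain_last {Q A : C} (h : Q ⟶ A) [Epi h] [Simple A]
    (sK : CompSeries (kernel h)) :
    (extendSeries h sK).chain (Fin.last (sK.n + 1)) = ⊤ := by
  simp only [extendSeries]
  exact Fin.snoc_last _ _

theorem one_le_mult_of_epi (hC : FiniteLength C) {A Q : C} [Simple A] (h : Q ⟶ A) [Epi h] :
    1 ≤ mult A Q := by
  obtain ⟨sK⟩ := hC (kernel h)
  have h1 : 1 ≤ (extendSeries h sK).mult A := by
    rw [CompSeries.mult]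
    have hne : Nonempty {i : Fin (extendSeries h sK).n // Nonempty (cokernel
        (Subobject.ofLE _ _ ((extendSeries h sK).mono (Fin.castSucc_lt_succ (i := i)).le)) ≅ A)} := by
      refine ⟨⟨Fin.last sK.n, ⟨?_⟩⟩⟩
      have ha : (extendSeries h sK).chain (Fin.castSucc (Fin.last sK.n)) =
          Subobject.mk ((⊤ : Subobject (kernel h)).arrow ≫ kernel.ι h) := by
        rw [extendSeries_chain_castSucc, sK.top]
      have hb : (extendSeries h sK).chain (Fin.last sK.n).succ = ⊤ := by
        rw [Fin.succ_last, extendSeries_chain_last]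
      exact cokOfLECongr ha hb _ ≪≫ cokKernelTopIso h
    exact Nat.one_le_iff_ne_zero.mpr (Nat.card_ne_zero.mpr ⟨hne, inferInstance⟩)
  exact le_trans h1 (le_csSup (bddAbove_multSet A Q hC) ⟨_, rfl⟩)

end Ext

end CuspidalAux

open CuspidalClean in

/-- If `(A : coker φ) = 0` and `N = N_A ⊕ N'` with `N_A` semisimple `A`-isotypic and
`(A : N') = 0`, then the composition of `φ` with the projection `N → N_A` is an
epimorphism. -/
theorem epi_comp_projection_of_mult_coker_eq_zero {C : Type*} [Category C] [Abelian C]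
    (hC : FiniteLength C) (A : C) [Simple A] {M N NA N' : C} (φ : M ⟶ N)
    (hcoker : mult A (cokernel φ) = 0) (e : N ≅ NA ⊞ N')
    (hNA : IsSemisimpleObj NA) (hNAiso : IsIsotypic A NA) (hN' : mult A N' = 0) :
    Epi (φ ≫ e.hom ≫ biprod.fst) := by
  have hz : IsZero (cokernel (φ ≫ e.hom ≫ biprod.fst)) := by
    by_contra hz
    obtain ⟨sQ⟩ := hC (cokernel (φ ≫ e.hom ≫ biprod.fst))
    obtain ⟨S, g, hS, hg⟩ := CuspidalAux.exists_epi_simple hz sQ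
    haveI := hS; haveI := hg
    -- the cokernel of `ψ` is a quotient of the cokernel of `φ`
    haveI : Epi (e.hom ≫ biprod.fst : N ⟶ NA) := by
      haveI : Epi (biprod.fst : NA ⊞ N' ⟶ NA) := inferInstance
      exact epi_comp _ _
    have hcond : φ ≫ (e.hom ≫ biprod.fst) ≫ cokernel.π (φ ≫ e.hom ≫ biprod.fst) = 0 := by
      rw [← Category.assoc, ← Category.assoc]
      rw [Category.assoc φ e.hom biprod.fst]
      exact cokernel.condition _
    set θ : cokernel φ ⟶ cokernel (φ ≫ e.hom ≫ biprod.fst) :=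
      cokernel.desc φ ((e.hom ≫ biprod.fst) ≫ cokernel.π (φ ≫ e.hom ≫ biprod.fst)) hcond
      with hθ
    haveI : Epi θ := by
      haveI : Epi ((e.hom ≫ biprod.fst) ≫ cokernel.π (φ ≫ e.hom ≫ biprod.fst)) := epi_comp _ _
      exact epi_of_epi_fac (cokernel.π_desc _ _ _)
    -- `S` is isomorphic to `A`, via a nonzero component of a direct sum decomposition
    obtain ⟨k, ⟨eNA⟩⟩ := hNAiso
    set v : (⨁ fun _ : Fin k => A) ⟶ S :=
      eNA.inv ≫ cokernel.π (φ ≫ e.hom ≫ biprod.fst) ≫ g with hv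
    haveI : Epi v := by
      haveI : Epi (cokernel.π (φ ≫ e.hom ≫ biprod.fst) ≫ g) := epi_comp _ _
      exact epi_comp _ _
    have hv0 : v ≠ 0 := by
      intro h0
      have hepi : Epi v := inferInstance
      rw [h0] at hepi
      haveI := hepi
      exact Simple.not_isZero S (IsZero.of_epi_zero (⨁ fun _ : Fin k => A) S)
    have hj : ∃ j : Fin k, biproduct.ι (fun _ : Fin k => A) j ≫ v ≠ 0 := by
      by_contra hall
      push_neg at hall
      refine hv0 ?_
      ext j
      rw [hall j, comp_zero]
    obtain ⟨j, hw⟩ := hj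
    set w : A ⟶ S := biproduct.ι (fun _ : Fin k => A) j ≫ v with hwdef
    have hker : kernel.ι w = 0 := kernel_zero_of_nonzero_from_simple hw
    haveI : Mono w := Abelian.mono_of_kernel_ι_eq_zero _ hker
    haveI : IsIso w := isIso_of_mono_of_nonzero hw
    -- so the cokernel of `φ` has an epimorphism onto `A`
    haveI : Epi (θ ≫ g ≫ inv w) := by
      haveI : Epi (g ≫ inv w) := epi_comp _ _
      exact epi_comp _ _
    have := CuspidalAux.one_le_mult_of_epi hC (θ ≫ g ≫ inv w)
    rw [hcoker] at this
    exact absurd this (by omega)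
  exact Preadditive.epi_of_isZero_cokernel _ hz
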